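/- For every positive integer p, S(1, 2p+1) = ∑_{j=0}^{p-1} (-1)^{j-1} T(2p+1-j) T(j+1) - (-1)^p T(p+1)²/2, where T(1) := 2 log 2, T(s) := 2∑_{m≥1} 1/(2m-1)^s for s ≥ 2, and S(1,m) := 4∑_{0<i<j} 1/((2i)(2j-1)^m). -/

import Mathlib

/-- Depth-one multiple T-value with the convention `T(1) = 2 log 2`. -/
noncomputable def Tval (s : ℕ) : ℝ :=
  if s = 1 then 2 * Real.log 2 else 2 * ∑' m : ℕ, (1 : ℝ) / (2 * (m : ℝ) + 1) ^ s

/-- Depth-two multiple S-value `S(1,m) = 4 ∑_{0<i<j} 1/((2i)(2j-1)^m)`. -/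
noncomputable def S1 (m : ℕ) : ℝ :=
  4 * ∑' (i : ℕ) (j : ℕ),
    (1 : ℝ) / ((2 * ((i : ℝ) + 1)) * (2 * ((i : ℝ) + (j : ℝ) + 2) - 1) ^ m)

open Finset Filter Real Topology

noncomputable def OO (s : ℕ) : ℝ := ∑' n : ℕ, (1:ℝ)/(2*(n:ℝ)+1)^s
noncomputable def ONf (s N : ℕ) : ℝ := ∑ n ∈ Finset.range N, (1:ℝ)/(2*(n:ℝ)+1)^s
noncomputable def HN (N : ℕ) : ℝ := ∑ k ∈ Finset.range N, (1:ℝ)/((k:ℝ)+1)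
noncomputable def GG (N a : ℕ) : ℝ := ∑ k ∈ Finset.range N, (1:ℝ)/((a:ℝ)+(k:ℝ)+1)
noncomputable def TL (N a : ℕ) : ℝ := ∑ k ∈ Finset.range a, (1:ℝ)/((N:ℝ)+(k:ℝ)+1)
noncomputable def AA (p N : ℕ) : ℝ :=
  ∑ a ∈ Finset.range N, (1/(2*(a:ℝ)+1)^(2*p+1)) * HN a
noncomputable def RR (p N : ℕ) : ℝ :=
  ∑ a ∈ Finset.range N, (1/(2*(a:ℝ)+1)^(2*p+1)) * TL N a
noncomputable def Gf (p : ℕ) : ℕ × ℕ → ℝ := fun x =>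
  if x.1 < x.2 then 1/(((x.1:ℝ)+1) * (2*(x.2:ℝ)+1)^(2*p+1)) else 0
noncomputable def Ff (p : ℕ) : ℕ × ℕ → ℝ := fun x =>
  1/(((x.1:ℝ)+1) * (2*((x.1:ℝ)+(x.2:ℝ)+1)+1)^(2*p+1))
def ee : ℕ × ℕ → ℕ × ℕ := fun x => (x.1, x.1 + x.2 + 1)

lemma sq_summable : Summable (fun n : ℕ => (1:ℝ)/((n:ℝ)+1)^2) := by
  have := (Real.summable_one_div_nat_pow (p := 2)).mpr (by norm_num)
  have := (summable_nat_add_iff 1).mpr this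
  simpa using this

lemma summable_obase {s : ℕ} (hs : 2 ≤ s) :
    Summable (fun n : ℕ => (1:ℝ)/(2*(n:ℝ)+1)^s) := by
  apply Summable.of_nonneg_of_le (fun n => by positivity) _ sq_summable
  intro n
  apply one_div_le_one_div_of_le (by positivity)
  calc ((n:ℝ)+1)^2 ≤ (2*(n:ℝ)+1)^2 := by
        apply pow_le_pow_left₀ (by positivity); linarith [Nat.cast_nonneg (α := ℝ) n]
    _ ≤ (2*(n:ℝ)+1)^s := by
        apply pow_le_pow_right₀ (by linarith [Nat.cast_nonneg (α := ℝ) n]) hs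

lemma HN_succ (n : ℕ) : HN (n+1) = HN n + 1/((n:ℝ)+1) := by
  rw [HN, HN, Finset.sum_range_succ]

lemma HN_eq_harmonic (N : ℕ) : HN N = (harmonic N : ℝ) := by
  rw [HN, harmonic]
  push_cast
  exact Finset.sum_congr rfl (fun i _ => by rw [one_div])

lemma onf_harmonic (N : ℕ) : 2 * ONf 1 N - HN N = 2 * (HN (2*N) - HN N) := by
  induction N with
  | zero => simp [ONf, HN]
  | succ n ih =>
    have e1 : HN (n+1) = HN n + 1/((n:ℝ)+1) := HN_succ n
    have e2 : ONf 1 (n+1) = ONf 1 n + 1/(2*(n:ℝ)+1) := by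
      rw [ONf, ONf, Finset.sum_range_succ, pow_one]
    have h1 : 2*(n+1) = (2*n+1)+1 := by ring
    have e3 : HN (2*(n+1)) = HN (2*n) + 1/(2*(n:ℝ)+1) + 1/(2*(n:ℝ)+2) := by
      rw [h1, HN_succ, HN_succ]
      push_cast; ring
    rw [e1, e2, e3]
    have hn : (0:ℝ) ≤ (n:ℝ) := Nat.cast_nonneg n
    have : 1/(2*(n:ℝ)+2) = (1/2) * (1/((n:ℝ)+1)) := by
      rw [div_mul_div_comm, div_eq_div_iff (by linarith) (by linarith)]
      ring
    linarith [ih, this]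

lemma tendsto_two_mul_nat : Tendsto (fun N : ℕ => 2*N) atTop atTop := by
  apply tendsto_atTop_atTop_of_monotone (fun x y h => by omega)
  intro b; exact ⟨b, by omega⟩

lemma lim_log2 : Tendsto (fun N => 2 * ONf 1 N - HN N) atTop (𝓝 (2 * Real.log 2)) := by
  have h1 := Real.tendsto_harmonic_sub_log
  have h2 : Tendsto (fun N : ℕ => (harmonic (2*N) : ℝ) - Real.log ((2:ℝ)*N)) atTop
      (𝓝 Real.eulerMascheroniConstant) := by
    apply (h1.comp tendsto_two_mul_nat).congr
    intro N
    simp only [Function.comp]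
    push_cast
    ring_nf
  have h3 : Tendsto (fun N : ℕ => ((harmonic (2*N) : ℝ) - Real.log ((2:ℝ)*N)) -
      ((harmonic N : ℝ) - Real.log N) + Real.log 2) atTop (𝓝 (Real.log 2)) := by
    have := (h2.sub h1).add_const (Real.log 2)
    simpa using this
  have h4 : Tendsto (fun N => HN (2*N) - HN N) atTop (𝓝 (Real.log 2)) := by
    apply h3.congr'
    filter_upwards [eventually_ge_atTop 1] with N hN
    have hN0 : (0:ℝ) < N := by exact_mod_cast hN
    rw [HN_eq_harmonic, HN_eq_harmonic]
    have : Real.log ((2:ℝ)*N) = Real.log 2 + Real.log N :=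
      Real.log_mul (by norm_num) (ne_of_gt hN0)
    rw [this]; ring
  have h5 := h4.const_mul (2:ℝ)
  simp only [onf_harmonic]
  exact h5

lemma alg (p : ℕ) (a b : ℝ) (ha : 0 < a) (hb : 0 < b) :
    ∑ j ∈ range (2*p+1), (-1:ℝ)^(j+1) * (1/a^(j+1)) * (1/b^(2*p+1-j))
      = -(1/a^(2*p+1) + 1/b^(2*p+1)) / (a+b) := by
  have hab : 0 < a + b := by linarith
  set c : ℕ → ℝ := fun j => (-1:ℝ)^j / (a^j * b^(2*p+1-j)) with hc
  have key : ∀ j ∈ range (2*p+1),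
      (-1:ℝ)^(j+1) * (1/a^(j+1)) * (1/b^(2*p+1-j)) = (c (j+1) - c j) / (a+b) := by
    intro j hj
    have hjle : j ≤ 2*p := by simpa using Nat.lt_succ_iff.mp (mem_range.mp hj)
    have h1 : 2*p+1-j = (2*p-j)+1 := by omega
    have h2 : 2*p+1-(j+1) = 2*p-j := by omega
    simp only [hc, h1, h2, pow_succ]
    have h3 : a^j ≠ 0 := by positivity
    have h4 : b^(2*p-j) ≠ 0 := by positivity
    field_simp
    ring
  rw [Finset.sum_congr rfl key, ← Finset.sum_div, Finset.sum_range_sub]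
  have h5 : c (2*p+1) = -(1/a^(2*p+1)) := by
    simp only [hc, Nat.sub_self, pow_zero, mul_one]
    rw [Odd.neg_one_pow ⟨p, by ring⟩]
    ring
  have h6 : c 0 = 1/b^(2*p+1) := by simp [hc]
  rw [h5, h6]; ring

lemma GG_eq (N a : ℕ) : GG N a = HN N - HN a + TL N a := by
  have e1 : HN (a+N) = HN a + GG N a := by
    rw [HN, Finset.sum_range_add, ← HN, GG]
    congr 1
    exact Finset.sum_congr rfl fun k _ => by push_cast; ring_nf
  have e2 : HN (N+a) = HN N + TL N a := by
    rw [HN, Finset.sum_range_add, ← HN, TL]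
    congr 1
    exact Finset.sum_congr rfl fun k _ => by push_cast; ring_nf
  rw [add_comm a N] at e1
  linarith [e1, e2]

lemma inner_b (N a : ℕ) : ∑ b ∈ range N, (1:ℝ)/((2*(a:ℝ)+1)+(2*(b:ℝ)+1))
    = (1/2) * GG N a := by
  rw [GG, Finset.mul_sum]
  refine Finset.sum_congr rfl fun b _ => ?_
  rw [one_div_mul_one_div]
  congr 1
  ring

lemma step1 (p N : ℕ) :
    ∑ j ∈ range (2*p+1), (-1:ℝ)^(j+1) * ONf (j+1) N * ONf (2*p+1-j) N
      = -2 * ∑ a ∈ range N, (1/(2*(a:ℝ)+1)^(2*p+1)) *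
          ∑ b ∈ range N, (1:ℝ)/((2*(a:ℝ)+1) + (2*(b:ℝ)+1)) := by
  have e1 : ∀ j : ℕ, (-1:ℝ)^(j+1) * ONf (j+1) N * ONf (2*p+1-j) N
      = ∑ a ∈ range N, ∑ b ∈ range N,
        (-1:ℝ)^(j+1) * ((1:ℝ)/(2*(a:ℝ)+1)^(j+1)) * ((1:ℝ)/(2*(b:ℝ)+1)^(2*p+1-j)) := by
    intro j
    rw [ONf, ONf, mul_assoc, Finset.sum_mul_sum, Finset.mul_sum]
    refine Finset.sum_congr rfl fun a _ => ?_
    rw [Finset.mul_sum]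
    exact Finset.sum_congr rfl fun b _ => by ring
  rw [Finset.sum_congr rfl (fun j _ => e1 j), Finset.sum_comm]
  have e2 : ∀ a : ℕ, ∑ j ∈ range (2*p+1), ∑ b ∈ range N,
      (-1:ℝ)^(j+1) * ((1:ℝ)/(2*(a:ℝ)+1)^(j+1)) * ((1:ℝ)/(2*(b:ℝ)+1)^(2*p+1-j))
      = ∑ b ∈ range N,
        -((1:ℝ)/(2*(a:ℝ)+1)^(2*p+1) + 1/(2*(b:ℝ)+1)^(2*p+1)) / ((2*(a:ℝ)+1)+(2*(b:ℝ)+1)) := by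
    intro a
    rw [Finset.sum_comm]
    exact Finset.sum_congr rfl fun b _ => alg p _ _ (by positivity) (by positivity)
  rw [Finset.sum_congr rfl (fun a _ => e2 a)]
  have e3 : ∀ a : ℕ, ∑ b ∈ range N,
      -((1:ℝ)/(2*(a:ℝ)+1)^(2*p+1) + 1/(2*(b:ℝ)+1)^(2*p+1)) / ((2*(a:ℝ)+1)+(2*(b:ℝ)+1))
      = (∑ b ∈ range N, -(((1:ℝ)/(2*(a:ℝ)+1)^(2*p+1)) / ((2*(a:ℝ)+1)+(2*(b:ℝ)+1))))
        + ∑ b ∈ range N, -(((1:ℝ)/(2*(b:ℝ)+1)^(2*p+1)) / ((2*(a:ℝ)+1)+(2*(b:ℝ)+1))) := by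
    intro a
    rw [← Finset.sum_add_distrib]
    exact Finset.sum_congr rfl fun b _ => by ring
  rw [Finset.sum_congr rfl (fun a _ => e3 a), Finset.sum_add_distrib]
  have e4 : ∑ a ∈ range N, ∑ b ∈ range N,
      -(((1:ℝ)/(2*(b:ℝ)+1)^(2*p+1)) / ((2*(a:ℝ)+1)+(2*(b:ℝ)+1)))
      = ∑ a ∈ range N, ∑ b ∈ range N,
      -(((1:ℝ)/(2*(a:ℝ)+1)^(2*p+1)) / ((2*(a:ℝ)+1)+(2*(b:ℝ)+1))) := by
    rw [Finset.sum_comm]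
    refine Finset.sum_congr rfl fun b _ => Finset.sum_congr rfl fun a _ => ?_
    rw [add_comm (2*(a:ℝ)+1) (2*(b:ℝ)+1)]
  rw [e4]
  have e5 : ∀ a : ℕ, ∑ b ∈ range N,
      -(((1:ℝ)/(2*(a:ℝ)+1)^(2*p+1)) / ((2*(a:ℝ)+1)+(2*(b:ℝ)+1)))
      = -((1/(2*(a:ℝ)+1)^(2*p+1)) * ∑ b ∈ range N, (1:ℝ)/((2*(a:ℝ)+1)+(2*(b:ℝ)+1))) := by
    intro a
    rw [Finset.mul_sum, ← Finset.sum_neg_distrib]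
    exact Finset.sum_congr rfl fun b _ => by rw [mul_one_div]
  rw [Finset.sum_congr rfl (fun a _ => e5 a), Finset.sum_neg_distrib]
  ring

lemma main_id (p N : ℕ) :
    AA p N = (∑ j ∈ range (2*p+1), (-1:ℝ)^(j+1) * ONf (j+1) N * ONf (2*p+1-j) N)
      + HN N * ONf (2*p+1) N + RR p N := by
  rw [step1]
  have e1 : ∀ a ∈ range N, (1/(2*(a:ℝ)+1)^(2*p+1)) *
      ∑ b ∈ range N, (1:ℝ)/((2*(a:ℝ)+1) + (2*(b:ℝ)+1))
      = (1/(2*(a:ℝ)+1)^(2*p+1)) * ((1/2) * (HN N - HN a + TL N a)) := by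
    intro a _
    rw [inner_b, GG_eq]
  rw [Finset.sum_congr rfl e1, ONf, Finset.mul_sum, Finset.mul_sum, RR, AA,
    ← Finset.sum_add_distrib, ← Finset.sum_add_distrib]
  exact Finset.sum_congr rfl fun a _ => by ring

set_option maxHeartbeats 2000000 in
lemma summable_Ff (p : ℕ) (hp : 1 ≤ p) : Summable (Ff p) := by
  have hle : ∀ x : ℕ × ℕ, Ff p x ≤ (1/((x.1:ℝ)+1)^2) * (1/((x.2:ℝ)+1)^2) := by
    rintro ⟨i, j⟩
    have hi : (0:ℝ) ≤ (i:ℝ) := Nat.cast_nonneg i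
    have hj : (0:ℝ) ≤ (j:ℝ) := Nat.cast_nonneg j
    have hXi : (i:ℝ)+1 ≤ 2*((i:ℝ)+(j:ℝ)+1)+1 := by linarith
    have hXj : (j:ℝ)+1 ≤ 2*((i:ℝ)+(j:ℝ)+1)+1 := by linarith
    have hX1 : (1:ℝ) ≤ 2*((i:ℝ)+(j:ℝ)+1)+1 := by linarith
    have hX0 : (0:ℝ) < 2*((i:ℝ)+(j:ℝ)+1)+1 := by linarith
    simp only [Ff]
    rw [one_div_mul_one_div]
    apply one_div_le_one_div_of_le (by positivity)
    have h3 : ((i:ℝ)+1)*(((j:ℝ)+1)*((j:ℝ)+1)) ≤ (2*((i:ℝ)+(j:ℝ)+1)+1)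
        * ((2*((i:ℝ)+(j:ℝ)+1)+1) * (2*((i:ℝ)+(j:ℝ)+1)+1)) :=
      mul_le_mul hXi (mul_le_mul hXj hXj (by positivity) hX0.le) (by positivity) hX0.le
    have h3' : ((i:ℝ)+1)*((j:ℝ)+1)^2 ≤ (2*((i:ℝ)+(j:ℝ)+1)+1)^3 := by
      calc ((i:ℝ)+1)*((j:ℝ)+1)^2 = ((i:ℝ)+1)*(((j:ℝ)+1)*((j:ℝ)+1)) := by ring
        _ ≤ (2*((i:ℝ)+(j:ℝ)+1)+1) * ((2*((i:ℝ)+(j:ℝ)+1)+1) * (2*((i:ℝ)+(j:ℝ)+1)+1)) := h3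
        _ = (2*((i:ℝ)+(j:ℝ)+1)+1)^3 := by ring
    have h4 : (2*((i:ℝ)+(j:ℝ)+1)+1)^3 ≤ (2*((i:ℝ)+(j:ℝ)+1)+1)^(2*p+1) :=
      pow_le_pow_right₀ hX1 (by omega)
    calc ((i:ℝ)+1)^2 * ((j:ℝ)+1)^2 = ((i:ℝ)+1) * (((i:ℝ)+1)*((j:ℝ)+1)^2) := by ring
      _ ≤ ((i:ℝ)+1) * (2*((i:ℝ)+(j:ℝ)+1)+1)^3 :=
          mul_le_mul_of_nonneg_left h3' (by linarith)
      _ ≤ ((i:ℝ)+1) * (2*((i:ℝ)+(j:ℝ)+1)+1)^(2*p+1) :=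
          mul_le_mul_of_nonneg_left h4 (by linarith)
  apply Summable.of_nonneg_of_le (fun x => by unfold Ff; positivity) hle
  exact sq_summable.mul_of_nonneg sq_summable (fun n => by positivity) (fun n => by positivity)

lemma hasSum_Gf (p : ℕ) (hp : 1 ≤ p) : HasSum (Gf p) (∑' x : ℕ × ℕ, Ff p x) := by
  have hinj : Function.Injective ee := by
    rintro ⟨a, b⟩ ⟨c, d⟩ h
    simp only [ee, Prod.mk.injEq] at h
    obtain ⟨h1, h2⟩ := h
    subst h1
    exact Prod.ext rfl (by omega)
  have hrange : ∀ x ∉ Set.range ee, Gf p x = 0 := by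
    rintro ⟨k, a⟩ hx
    by_cases h : k < a
    · exfalso
      refine hx ⟨(k, a - k - 1), ?_⟩
      simp only [ee]
      rw [Prod.mk.injEq]
      exact ⟨rfl, by omega⟩
    · simp [Gf, h]
  have hcomp : (Gf p) ∘ ee = Ff p := by
    funext x
    simp only [Function.comp, Gf, Ff, ee]
    simp only [show x.1 < x.1 + x.2 + 1 by omega, ↓reduceIte]
    push_cast
    ring_nf
  rw [← Function.Injective.hasSum_iff hinj hrange, hcomp]
  exact (summable_Ff p hp).hasSum

lemma AA_eq_sum_Gf (p N : ℕ) : AA p N = ∑ x ∈ range N ×ˢ range N, Gf p x := by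
  rw [Finset.sum_product_right, AA]
  refine Finset.sum_congr rfl fun a ha => ?_
  have haN : a ≤ N := le_of_lt (mem_range.mp ha)
  have hfilter : (range N).filter (fun k => k < a) = range a := by
    ext k; simp only [mem_filter, mem_range]; omega
  refine Eq.symm ?_
  calc ∑ k ∈ range N, Gf p (k, a)
      = ∑ k ∈ range N, if k < a then 1/(((k:ℝ)+1) * (2*(a:ℝ)+1)^(2*p+1)) else 0 := rfl
    _ = ∑ k ∈ (range N).filter (fun k => k < a), 1/(((k:ℝ)+1) * (2*(a:ℝ)+1)^(2*p+1)) :=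
        (Finset.sum_filter _ _).symm
    _ = ∑ k ∈ range a, 1/(((k:ℝ)+1) * (2*(a:ℝ)+1)^(2*p+1)) := by rw [hfilter]
    _ = (1/(2*(a:ℝ)+1)^(2*p+1)) * HN a := by
        rw [HN, Finset.mul_sum]
        refine Finset.sum_congr rfl fun k _ => ?_
        rw [one_div_mul_one_div, mul_comm ((2*(a:ℝ)+1)^(2*p+1)) ((k:ℝ)+1)]

lemma tendsto_AA (p : ℕ) (hp : 1 ≤ p) :
    Tendsto (AA p) atTop (𝓝 (∑' x : ℕ × ℕ, Ff p x)) := by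
  have h := hasSum_Gf p hp
  have ht : Tendsto (fun N : ℕ => range N ×ˢ range N) atTop atTop := by
    apply tendsto_atTop_finset_of_monotone
    · intro i j hij
      exact Finset.product_subset_product (Finset.range_subset_range.mpr hij)
        (Finset.range_subset_range.mpr hij)
    · intro x
      exact ⟨max x.1 x.2 + 1, Finset.mem_product.mpr
        ⟨mem_range.mpr (by omega), mem_range.mpr (by omega)⟩⟩
  have h2 := (h.comp ht : Tendsto _ atTop (𝓝 (∑' x : ℕ × ℕ, Ff p x)))
  apply h2.congr
  intro N
  exact (AA_eq_sum_Gf p N).symm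

lemma S1_eq (p : ℕ) (hp : 1 ≤ p) : S1 (2*p+1) = 2 * ∑' x : ℕ × ℕ, Ff p x := by
  have hsum := summable_Ff p hp
  have hprod : ∑' x : ℕ × ℕ, Ff p x = ∑' i : ℕ, ∑' j : ℕ, Ff p (i,j) :=
    Summable.tsum_prod' hsum (fun b => hsum.prod_factor b)
  have key : ∀ i j : ℕ, (1:ℝ)/((2*((i:ℝ)+1)) * (2*((i:ℝ)+(j:ℝ)+2)-1)^(2*p+1))
      = (1/2) * Ff p (i,j) := by
    intro i j
    simp only [Ff]
    have e : (2*((i:ℝ)+(j:ℝ)+2)-1) = 2*((i:ℝ)+(j:ℝ)+1)+1 := by ring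
    rw [e, one_div_mul_one_div]
    congr 1
    ring
  rw [S1, hprod]
  have e1 : ∀ i : ℕ, ∑' j : ℕ, (1:ℝ)/((2*((i:ℝ)+1)) * (2*((i:ℝ)+(j:ℝ)+2)-1)^(2*p+1))
      = (1/2) * ∑' j : ℕ, Ff p (i,j) := by
    intro i
    rw [← tsum_mul_left]
    exact tsum_congr fun j => key i j
  rw [tsum_congr e1, tsum_mul_left]
  ring

lemma tendsto_RR (p : ℕ) (hp : 1 ≤ p) : Tendsto (RR p) atTop (𝓝 0) := by
  set B : ℝ := ∑' n : ℕ, (1:ℝ)/((n:ℝ)+1)^2 with hB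
  have hnn : ∀ N, 0 ≤ RR p N := by
    intro N
    apply Finset.sum_nonneg
    intro a _
    apply mul_nonneg (by positivity)
    apply Finset.sum_nonneg
    intro k _
    positivity
  have hbound : ∀ N : ℕ, RR p N ≤ B * (1/((N:ℝ)+1)) := by
    intro N
    have hterm : ∀ a ∈ range N, (1/(2*(a:ℝ)+1)^(2*p+1)) * TL N a
        ≤ (1/((a:ℝ)+1)^2) * (1/((N:ℝ)+1)) := by
      intro a _
      have ha : (0:ℝ) ≤ (a:ℝ) := Nat.cast_nonneg a
      have hN : (0:ℝ) ≤ (N:ℝ) := Nat.cast_nonneg N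
      have hTL : TL N a ≤ (a:ℝ) * (1/((N:ℝ)+1)) := by
        rw [TL]
        calc ∑ k ∈ Finset.range a, (1:ℝ)/((N:ℝ)+(k:ℝ)+1)
            ≤ ∑ k ∈ Finset.range a, (1:ℝ)/((N:ℝ)+1) := by
              apply Finset.sum_le_sum
              intro k _
              apply one_div_le_one_div_of_le (by linarith)
              have : (0:ℝ) ≤ (k:ℝ) := Nat.cast_nonneg k
              linarith
          _ = (a:ℝ) * (1/((N:ℝ)+1)) := by
              rw [Finset.sum_const, Finset.card_range, nsmul_eq_mul]
      have hTL0 : 0 ≤ TL N a := Finset.sum_nonneg fun k _ => by positivity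
      have hw : (1/(2*(a:ℝ)+1)^(2*p+1)) ≤ 1/(2*(a:ℝ)+1)^3 := by
        apply one_div_le_one_div_of_le (by positivity)
        exact pow_le_pow_right₀ (by linarith) (by omega)
      calc (1/(2*(a:ℝ)+1)^(2*p+1)) * TL N a
          ≤ (1/(2*(a:ℝ)+1)^3) * ((a:ℝ) * (1/((N:ℝ)+1))) := by
            apply mul_le_mul hw hTL hTL0 (by positivity)
        _ = ((a:ℝ)/(2*(a:ℝ)+1)^3) * (1/((N:ℝ)+1)) := by ring
        _ ≤ (1/((a:ℝ)+1)^2) * (1/((N:ℝ)+1)) := by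
            apply mul_le_mul_of_nonneg_right _ (by positivity)
            rw [div_le_div_iff₀ (by positivity) (by positivity)]
            nlinarith [ha, mul_nonneg ha ha, mul_nonneg (mul_nonneg ha ha) ha]
    calc RR p N ≤ ∑ a ∈ range N, (1/((a:ℝ)+1)^2) * (1/((N:ℝ)+1)) :=
          Finset.sum_le_sum hterm
      _ = (∑ a ∈ range N, (1/((a:ℝ)+1)^2)) * (1/((N:ℝ)+1)) := by
          rw [Finset.sum_mul]
      _ ≤ B * (1/((N:ℝ)+1)) := by
          apply mul_le_mul_of_nonneg_right _ (by positivity)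
          exact Summable.sum_le_tsum (range N) (fun i _ => by positivity) sq_summable
  have hlim : Tendsto (fun N : ℕ => B * (1/((N:ℝ)+1))) atTop (𝓝 0) := by
    have := tendsto_one_div_add_atTop_nhds_zero_nat.const_mul B
    simpa using this
  exact squeeze_zero hnn hbound hlim

lemma tendsto_ONf {s : ℕ} (hs : 2 ≤ s) : Tendsto (fun N => ONf s N) atTop (𝓝 (OO s)) :=
  (summable_obase hs).hasSum.tendsto_sum_nat

lemma key_limit (q : ℕ) :
    S1 (2*(q+1)+1) = 2 * (∑ i ∈ range (2*q+1), (-1:ℝ)^i * OO (i+2) * OO (2*q+2-i))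
      - 4 * Real.log 2 * OO (2*(q+1)+1) := by
  have hp : 1 ≤ q+1 := by omega
  have hdec : ∀ N : ℕ, AA (q+1) N
      = (∑ i ∈ range (2*q+1), (-1:ℝ)^i * ONf (i+2) N * ONf (2*q+2-i) N)
        - (2 * ONf 1 N - HN N) * ONf (2*(q+1)+1) N + RR (q+1) N := by
    intro N
    have h0 := main_id (q+1) N
    have hm : 2*(q+1)+1 = (2*q+2)+1 := by omega
    rw [hm, Finset.sum_range_succ, Finset.sum_range_succ'] at h0
    have hf0 : (-1:ℝ)^(0+1) * ONf (0+1) N * ONf (2*q+2+1-0) N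
        = -(ONf 1 N * ONf (2*q+2+1) N) := by norm_num
    have hflast : (-1:ℝ)^((2*q+2)+1) * ONf ((2*q+2)+1) N * ONf (2*q+2+1-(2*q+2)) N
        = -(ONf 1 N * ONf (2*q+2+1) N) := by
      have e1 : 2*q+2+1-(2*q+2) = 1 := by omega
      rw [e1, Odd.neg_one_pow ⟨q+1, by omega⟩]
      ring
    have hmid : ∀ i ∈ range (2*q+1), (-1:ℝ)^((i+1)+1) * ONf ((i+1)+1) N * ONf (2*q+2+1-(i+1)) N
        = (-1:ℝ)^i * ONf (i+2) N * ONf (2*q+2-i) N := by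
      intro i _
      have e1 : 2*q+2+1-(i+1) = 2*q+2-i := by omega
      have e2 : (i+1)+1 = i+2 := by omega
      have e3 : (-1:ℝ)^((i+1)+1) = (-1)^i := by rw [pow_succ, pow_succ]; ring
      rw [e1, e2, e3]
    rw [Finset.sum_congr rfl hmid, hf0, hflast] at h0
    rw [h0, hm]
    ring
  have hlim1 : Tendsto (fun N => ∑ i ∈ range (2*q+1), (-1:ℝ)^i * ONf (i+2) N * ONf (2*q+2-i) N)
      atTop (𝓝 (∑ i ∈ range (2*q+1), (-1:ℝ)^i * OO (i+2) * OO (2*q+2-i))) := by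
    apply tendsto_finset_sum
    intro i hi
    have hi' : i ≤ 2*q := by simpa using Nat.lt_succ_iff.mp (mem_range.mp hi)
    have h1 : Tendsto (fun N => ONf (i+2) N) atTop (𝓝 (OO (i+2))) := tendsto_ONf (by omega)
    have h2 : Tendsto (fun N => ONf (2*q+2-i) N) atTop (𝓝 (OO (2*q+2-i))) :=
      tendsto_ONf (by omega)
    exact ((h1.const_mul _).mul h2)
  have hlim2 : Tendsto (fun N => (2 * ONf 1 N - HN N) * ONf (2*(q+1)+1) N) atTop
      (𝓝 (2 * Real.log 2 * OO (2*(q+1)+1))) :=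
    lim_log2.mul (tendsto_ONf (by omega))
  have hlimA : Tendsto (AA (q+1)) atTop
      (𝓝 ((∑ i ∈ range (2*q+1), (-1:ℝ)^i * OO (i+2) * OO (2*q+2-i))
        - 2 * Real.log 2 * OO (2*(q+1)+1) + 0)) := by
    apply Tendsto.congr (fun N => (hdec N).symm)
    exact (hlim1.sub hlim2).add (tendsto_RR (q+1) hp)
  have huniq := tendsto_nhds_unique (tendsto_AA (q+1) hp) hlimA
  rw [S1_eq (q+1) hp, huniq]
  ring

lemma Tval_one : Tval 1 = 2 * Real.log 2 := if_pos rfl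

lemma Tval_eq {s : ℕ} (hs : 2 ≤ s) : Tval s = 2 * OO s := by
  rw [Tval, if_neg (by omega)]
  rfl

lemma neg_one_pow_sub (q a : ℕ) (h : a ≤ 2*q) : (-1:ℝ)^(2*q-a) = (-1)^a := by
  have h2 : (-1:ℝ)^(2*q-a) * (-1)^a = 1 := by
    rw [← pow_add]
    have e : 2*q-a+a = 2*q := by omega
    rw [e, pow_mul]
    norm_num
  rcases neg_one_pow_eq_or ℝ a with h3|h3 <;> rw [h3] at h2 ⊢ <;> linarith [h2]

lemma sym_sum (q : ℕ) :
    ∑ i ∈ range (2*q+1), (-1:ℝ)^i * OO (i+2) * OO (2*q+2-i)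
      = 2 * (∑ i ∈ range q, (-1:ℝ)^i * OO (i+2) * OO (2*q+2-i))
        + (-1:ℝ)^q * OO (q+2) * OO (q+2) := by
  have hsplit : range (2*q+1) = Finset.Ico 0 (q+1) ∪ Finset.Ico (q+1) (2*q+1) := by
    rw [Finset.range_eq_Ico]
    rw [Finset.Ico_union_Ico_eq_Ico (by omega) (by omega)]
  have hdisj : Disjoint (Finset.Ico 0 (q+1)) (Finset.Ico (q+1) (2*q+1)) := by
    apply Finset.Ico_disjoint_Ico_consecutive
  rw [hsplit, Finset.sum_union hdisj]
  have e1 : ∑ i ∈ Finset.Ico 0 (q+1), (-1:ℝ)^i * OO (i+2) * OO (2*q+2-i)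
      = (∑ i ∈ range q, (-1:ℝ)^i * OO (i+2) * OO (2*q+2-i))
        + (-1:ℝ)^q * OO (q+2) * OO (q+2) := by
    rw [← Finset.range_eq_Ico, Finset.sum_range_succ]
    have e : 2*q+2-q = q+2 := by omega
    rw [e]
  have e2 : ∑ i ∈ Finset.Ico (q+1) (2*q+1), (-1:ℝ)^i * OO (i+2) * OO (2*q+2-i)
      = ∑ i ∈ range q, (-1:ℝ)^i * OO (i+2) * OO (2*q+2-i) := by
    apply Finset.sum_nbij' (i := fun a => 2*q-a) (j := fun a => 2*q-a)
    · intro a ha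
      simp only [Finset.mem_Ico] at ha
      exact mem_range.mpr (by omega)
    · intro a ha
      have := mem_range.mp ha
      simp only [Finset.mem_Ico]
      omega
    · intro a ha
      simp only [Finset.mem_Ico] at ha
      omega
    · intro a ha
      have := mem_range.mp ha
      omega
    · intro a ha
      simp only [Finset.mem_Ico] at ha
      have hle : a ≤ 2*q := by omega
      have s1 : (-1:ℝ)^(2*q-a) = (-1)^a := neg_one_pow_sub q a hle
      have s2 : 2*q-a+2 = 2*q+2-a := by omega
      have s3 : 2*q+2-(2*q-a) = a+2 := by omega
      rw [s1, s2, s3]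
      ring
  rw [e1, e2]
  ring

theorem stmt12 (p : ℕ) (hp : 0 < p) :
    S1 (2 * p + 1)
      = (∑ j ∈ Finset.range p, (-1 : ℝ) ^ (j + 1) * Tval (2 * p + 1 - j) * Tval (j + 1))
        - (-1 : ℝ) ^ p * Tval (p + 1) ^ 2 / 2 := by
  obtain ⟨q, rfl⟩ : ∃ q, p = q+1 := ⟨p-1, by omega⟩
  rw [key_limit q, sym_sum q]
  have hrhs : ∑ j ∈ Finset.range (q+1), (-1:ℝ)^(j+1) * Tval (2*(q+1)+1-j) * Tval (j+1)
      = (∑ i ∈ range q, (-1:ℝ)^((i+1)+1) * Tval (2*(q+1)+1-(i+1)) * Tval ((i+1)+1))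
        + (-1:ℝ)^(0+1) * Tval (2*(q+1)+1-0) * Tval (0+1) :=
    Finset.sum_range_succ' _ q
  have hmid : ∀ i ∈ range q, (-1:ℝ)^((i+1)+1) * Tval (2*(q+1)+1-(i+1)) * Tval ((i+1)+1)
      = 4 * ((-1:ℝ)^i * OO (i+2) * OO (2*q+2-i)) := by
    intro i hi
    have hi' : i < q := mem_range.mp hi
    have e1 : 2*(q+1)+1-(i+1) = 2*q+2-i := by omega
    have e2 : (i+1)+1 = i+2 := by omega
    have e3 : (-1:ℝ)^((i+1)+1) = (-1)^i := by rw [pow_succ, pow_succ]; ring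
    rw [e1, e2, e3, Tval_eq (s := 2*q+2-i) (by omega), Tval_eq (s := i+2) (by omega)]
    ring
  have h0 : (-1:ℝ)^(0+1) * Tval (2*(q+1)+1-0) * Tval (0+1)
      = -(2 * OO (2*(q+1)+1)) * (2 * Real.log 2) := by
    have e1 : 2*(q+1)+1-0 = 2*(q+1)+1 := by omega
    rw [e1, Tval_one, Tval_eq (s := 2*(q+1)+1) (by omega)]
    ring
  rw [hrhs, Finset.sum_congr rfl hmid, h0, Tval_eq (s := q+1+1) (by omega)]
  have e4 : q+1+1 = q+2 := by omega
  rw [e4, ← Finset.mul_sum]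
  ring
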